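/- Let ζ and λ be nonzero real numbers and L ≥ 1. Writing Q(ζ) for the supercharge with parameter ζ, the conjugation relations M(λ) Q(λ⁻²ζ) = Q(ζ) M(λ) and M(λ⁻¹) Q(λ⁻²ζ)† = Q(ζ)† M(λ⁻¹) hold, where on each side M(λ) acts on the appropriate space (V^L on the right of Q and V^{L+1} on its left in the first relation, and conversely in the second). -/

import Mathlib

open scoped BigOperators

noncomputable section

namespace EightVertex

/-- Spin configurations of a chain of length `L`: `0` is spin up, `1` is spin down. -/
abbrev Cfg (L : ℕ) := Fin L → Fin 2

/-- The Hilbert space `V^L = (ℂ²)^{⊗L}`, with its canonical orthonormal basis indexed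
by spin configurations and the standard Hermitian inner product (conjugate-linear in
the first argument). -/
abbrev V (L : ℕ) := EuclideanSpace ℂ (Cfg L)

/-- The canonical basis state `|s₁ ⋯ s_L⟩`. -/
def bs {L : ℕ} (s : Cfg L) : V L := EuclideanSpace.single s 1

/-- The all-spins-up basis state `|↑⋯↑⟩`. -/
def allUp (L : ℕ) : V L := bs (fun _ => 0)

/-- Cyclic successor on `Fin L`. -/
def cyc {L : ℕ} (j : Fin L) : Fin L := ⟨((j : ℕ) + 1) % L, Nat.mod_lt _ j.pos⟩

/-- Matrix of the translation operator `S`: `S|s₁⋯s_L⟩ = |s_L s₁ ⋯ s_{L-1}⟩`. -/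
def Smat (L : ℕ) : Matrix (Cfg L) (Cfg L) ℂ :=
  fun s' s => if (∀ j, s' (cyc j) = s j) then 1 else 0

/-- The translation operator `S` on `V^L`. -/
def Sop (L : ℕ) : V L →ₗ[ℂ] V L := Matrix.toEuclideanLin (Smat L)

/-- The subspace `W^L ⊆ V^L` of alternate-cyclic states: the eigenspace of the
translation operator with eigenvalue `(-1)^{L+1}`. -/
def W (L : ℕ) : Submodule ℂ (V L) :=
  Module.End.eigenspace (Sop L : Module.End ℂ (V L)) ((-1 : ℂ) ^ (L + 1))

def sigmaX : Matrix (Fin 2) (Fin 2) ℂ := !![0, 1; 1, 0]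
def sigmaY : Matrix (Fin 2) (Fin 2) ℂ := !![0, -Complex.I; Complex.I, 0]
def sigmaZ : Matrix (Fin 2) (Fin 2) ℂ := !![1, 0; 0, -1]

/-- The one-site operator `A_j` acting on site `j` of the chain. -/
def site {L : ℕ} (A : Matrix (Fin 2) (Fin 2) ℂ) (j : Fin L) : Matrix (Cfg L) (Cfg L) ℂ :=
  fun s' s => A (s' j) (s j) * ∏ k ∈ Finset.univ.erase j, (if s' k = s k then (1 : ℂ) else 0)

/-- Matrix of the periodic XYZ Hamiltonian
`H = -(1/2) ∑_j (Jx σ^x_j σ^x_{j+1} + Jy σ^y_j σ^y_{j+1} + Jz σ^z_j σ^z_{j+1})`. -/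
def HxyzMat (Jx Jy Jz : ℝ) (L : ℕ) : Matrix (Cfg L) (Cfg L) ℂ :=
  (-(1/2) : ℂ) • ∑ j : Fin L,
    ((Jx : ℂ) • (site sigmaX j * site sigmaX (cyc j)) +
     (Jy : ℂ) • (site sigmaY j * site sigmaY (cyc j)) +
     (Jz : ℂ) • (site sigmaZ j * site sigmaZ (cyc j)))

/-- The periodic XYZ Hamiltonian on `V^L`. -/
def Hxyz (Jx Jy Jz : ℝ) (L : ℕ) : V L →ₗ[ℂ] V L := Matrix.toEuclideanLin (HxyzMat Jx Jy Jz L)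

/-- The XYZ Hamiltonian with the supersymmetric anisotropy parameters
`Jx = 1+ζ`, `Jy = 1-ζ`, `Jz = (ζ²-1)/2`. -/
def HxyzSusy (ζ : ℝ) (L : ℕ) : V L →ₗ[ℂ] V L :=
  Hxyz (1 + ζ) (1 - ζ) ((ζ ^ 2 - 1) / 2) L

/-- The ground-state energy `E₀ = -(2n+1)(3+ζ²)/4`. -/
def E0 (n : ℕ) (ζ : ℝ) : ℝ := -(2 * (n : ℝ) + 1) * (3 + ζ ^ 2) / 4

/-- Matrix of the spin-parity operator `P = (-1)^L σ^z_1 ⋯ σ^z_L`. -/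
def Pmat (L : ℕ) : Matrix (Cfg L) (Cfg L) ℂ :=
  fun s' s => if s' = s then (-1 : ℂ) ^ L * ∏ j, (if s j = 0 then (1 : ℂ) else -1) else 0

/-- The spin-parity operator `P` on `V^L`. -/
def Pop (L : ℕ) : V L →ₗ[ℂ] V L := Matrix.toEuclideanLin (Pmat L)

/-- Spin flip on a single site. -/
def flip : Fin 2 → Fin 2 := fun x => if x = 0 then 1 else 0

/-- Matrix of the spin-reversal operator `R = σ^x_1 ⋯ σ^x_L`. -/
def Rrevmat (L : ℕ) : Matrix (Cfg L) (Cfg L) ℂ :=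
  fun s' s => if (∀ j, s' j = flip (s j)) then 1 else 0

/-- The spin-reversal operator `R` on `V^L`. -/
def Rrev (L : ℕ) : V L →ₗ[ℂ] V L := Matrix.toEuclideanLin (Rrevmat L)

/-- Entries of the eight-vertex `R`-matrix with weights `a,b,c,d`.  In each pair the
first component is the auxiliary-space index, the second one the physical index;
the first argument is the outgoing pair, the second the incoming pair.  In the
ordered basis `↑↑, ↑↓, ↓↑, ↓↓` its rows are `(a,0,0,d), (0,b,c,0), (0,c,b,0), (d,0,0,a)`. -/
def Rv (a b c d : ℂ) : Fin 2 × Fin 2 → Fin 2 × Fin 2 → ℂ := fun o i =>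
  if o = i then (if o.1 = o.2 then a else b)
  else if o.1 = i.2 ∧ o.2 = i.1 ∧ i.1 ≠ i.2 then c
  else if o.1 = o.2 ∧ i.1 = i.2 ∧ o.1 ≠ i.1 then d
  else 0

/-- Matrix of the transfer matrix `T = tr₀(R₀L ⋯ R₀1)` of the eight-vertex model. -/
def Tmat (a b c d : ℂ) (L : ℕ) : Matrix (Cfg L) (Cfg L) ℂ :=
  fun s' s => ∑ t : Cfg L, ∏ j : Fin L, Rv a b c d (t (cyc j), s' j) (t j, s j)

/-- The transfer matrix `T` of the eight-vertex model on `V^L`. -/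
def Top (a b c d : ℂ) (L : ℕ) : V L →ₗ[ℂ] V L := Matrix.toEuclideanLin (Tmat a b c d L)

/-- Entries of the local supercharge `q(ζ) : ℂ² → ℂ² ⊗ ℂ²`, `q|↑⟩ = 0`,
`q|↓⟩ = |↑↑⟩ - ζ|↓↓⟩`; arguments: incoming spin, the two outgoing spins. -/
def qloc (ζ : ℂ) (si o1 o2 : Fin 2) : ℂ :=
  if si = 1 then
    (if o1 = 0 ∧ o2 = 0 then 1 else if o1 = 1 ∧ o2 = 1 then -ζ else 0)
  else 0

/-- Position of site `k` of the original chain after insertion of one site at `j`. -/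
def insIdx {L : ℕ} (j k : Fin L) : Fin (L + 1) :=
  if (k : ℕ) < (j : ℕ) then k.castSucc else k.succ

/-- Matrix of the local supercharge `q_j : V^L → V^{L+1}` acting on the `j`-th site
(`j : Fin L` corresponds to the paper's `j+1 ∈ {1,…,L}`). -/
def qjMat (ζ : ℂ) {L : ℕ} (j : Fin L) : Matrix (Cfg (L + 1)) (Cfg L) ℂ :=
  fun s' s => qloc ζ (s j) (s' j.castSucc) (s' j.succ) *
    ∏ k ∈ Finset.univ.erase j, (if s' (insIdx j k) = s k then (1 : ℂ) else 0)

/-- Matrix of `∑_{j=0}^{L} (-1)^j q_j`, where `q_0 = S q_L`. -/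
def QsumMat (ζ : ℂ) : (L : ℕ) → Matrix (Cfg (L + 1)) (Cfg L) ℂ
  | 0 => 0
  | (M + 1) =>
      Smat (M + 2) * qjMat ζ (Fin.last M) +
      ∑ j : Fin (M + 1), ((-1 : ℂ) ^ ((j : ℕ) + 1)) • qjMat ζ j

/-- The supercharge `Q(ζ) : V^L → V^{L+1}`: it acts as
`√(L/(L+1)) ∑_{j=0}^L (-1)^j q_j` on the alternate-cyclic subspace `W^L` and as zero
on the other eigenspaces of the translation operator (equivalently, on the orthogonal
complement of `W^L`, since `S` is unitary). -/
def Qsc (ζ : ℝ) (L : ℕ) : V L →ₗ[ℂ] V (L + 1) :=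
  (Real.sqrt ((L : ℝ) / ((L : ℝ) + 1)) : ℂ) •
    ((Matrix.toEuclideanLin (QsumMat (ζ : ℂ) L)) ∘ₗ
      ((W L).subtype ∘ₗ (Submodule.orthogonalProjection (W L)).toLinearMap))

/-- The adjoint supercharge `Q(ζ)† : V^L → V^{L-1}`. -/
def Qadj (ζ : ℝ) : (L : ℕ) → (V L →ₗ[ℂ] V (L - 1))
  | 0 => 0
  | (K + 1) => LinearMap.adjoint (Qsc ζ K)

/-- Number of down spins of a configuration. -/
def nDown {L : ℕ} (s : Cfg L) : ℕ := (Finset.univ.filter fun j => s j = 1).card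

/-- The state `Φ_n(ζ) = ∑_{m=0}^{n} ζ^m ∑_{x₁<⋯<x_{2m+1}} ||x₁,…,x_{2m+1}⟩⟩`. -/
def Phi (ζ : ℝ) (n : ℕ) : V (2 * n + 1) :=
  ∑ s : Cfg (2 * n + 1),
    (if nDown s % 2 = 1 then ((ζ : ℂ) ^ (nDown s / 2)) else 0) • bs s

/-- The state `Φ̄_n(ζ) = ∑_{m=0}^{n} ζ^m ∑_{x₁<⋯<x_{2m}} ||x₁,…,x_{2m}⟩⟩`. -/
def PhiBar (ζ : ℝ) (n : ℕ) : V (2 * n + 1) :=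
  ∑ s : Cfg (2 * n + 1),
    (if nDown s % 2 = 0 then ((ζ : ℂ) ^ (nDown s / 2)) else 0) • bs s

/-- Matrix of the operator `M(λ) = m₁(λ) ⋯ m_L(λ)`, where `m(λ)|↑⟩ = λ|↑⟩`,
`m(λ)|↓⟩ = λ²|↓⟩`. -/
def Mmat (lam : ℂ) (L : ℕ) : Matrix (Cfg L) (Cfg L) ℂ :=
  fun s' s => if s' = s then ∏ j, (if s j = 0 then lam else lam ^ 2) else 0

/-- The operator `M(λ)` on `V^L`. -/
def Mop (lam : ℂ) (L : ℕ) : V L →ₗ[ℂ] V L := Matrix.toEuclideanLin (Mmat lam L)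

/-! ### Auxiliary lemmas for statement 15 -/

section Aux

lemma toEuclideanLin_mul {m n p : Type*} [Fintype m] [Fintype n] [Fintype p]
    [DecidableEq n] [DecidableEq p]
    (A : Matrix m n ℂ) (B : Matrix n p ℂ) :
    Matrix.toEuclideanLin (A * B) =
      Matrix.toEuclideanLin A ∘ₗ Matrix.toEuclideanLin B := by
  apply LinearMap.ext
  intro x
  simp [Matrix.toEuclideanLin_apply, Matrix.mulVec_mulVec]

lemma toEuclideanLin_one {n : Type*} [Fintype n] [DecidableEq n] :
    Matrix.toEuclideanLin (1 : Matrix n n ℂ) = LinearMap.id := by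
  apply LinearMap.ext
  intro x
  simp [Matrix.toEuclideanLin_apply]

lemma Mmat_diagonal (lam : ℂ) (L : ℕ) :
    Mmat lam L = Matrix.diagonal (fun s : Cfg L => ∏ j, (if s j = 0 then lam else lam ^ 2)) := by
  ext s' s
  by_cases h : s' = s
  · subst h; simp [Mmat, Matrix.diagonal]
  · simp [Mmat, Matrix.diagonal, h]

lemma Mmat_mul_Mmat (a b : ℂ) (L : ℕ) :
    Mmat a L * Mmat b L = Mmat (a * b) L := by
  rw [Mmat_diagonal, Mmat_diagonal, Mmat_diagonal, Matrix.diagonal_mul_diagonal]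
  apply congrArg Matrix.diagonal
  funext s
  rw [← Finset.prod_mul_distrib]
  apply Finset.prod_congr rfl
  intro j _
  by_cases h : s j = 0 <;> simp [h] <;> ring

lemma Mmat_one (L : ℕ) : Mmat 1 L = (1 : Matrix (Cfg L) (Cfg L) ℂ) := by
  rw [Mmat_diagonal]
  simp [Matrix.diagonal_one]

lemma Mmat_conjTranspose (lam : ℝ) (L : ℕ) :
    (Mmat (lam : ℂ) L).conjTranspose = Mmat (lam : ℂ) L := by
  ext s' s
  simp only [Matrix.conjTranspose_apply, Mmat]
  by_cases h : s' = s
  · subst h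
    rw [if_pos rfl, star_prod]
    apply Finset.prod_congr rfl
    intro k _
    by_cases hk : s' k = 0 <;>
      simp [hk, Complex.star_def, ← Complex.ofReal_pow, Complex.conj_ofReal]
  · rw [if_neg (fun hh => h hh.symm), if_neg h, star_zero]

lemma mod_succ_eq {L : ℕ} (x : Fin L) :
    ((x : ℕ) + 1) % L = if (x : ℕ) + 1 = L then 0 else (x : ℕ) + 1 := by
  have hx := x.is_lt
  split
  · rename_i h; rw [h, Nat.mod_self]
  · exact Nat.mod_eq_of_lt (by omega)

lemma cyc_bijective {L : ℕ} : Function.Bijective (cyc (L := L)) := by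
  rw [Finite.injective_iff_bijective.symm]
  intro a b h
  have h' : ((a : ℕ) + 1) % L = ((b : ℕ) + 1) % L := congrArg Fin.val h
  rw [mod_succ_eq, mod_succ_eq] at h'
  have ha := a.is_lt
  have hb := b.is_lt
  apply Fin.ext
  split at h' <;> split at h' <;> omega

lemma Mmat_mul_Smat (lam : ℂ) (L : ℕ) :
    Mmat lam L * Smat L = Smat L * Mmat lam L := by
  rw [Mmat_diagonal]
  ext s' s
  rw [Matrix.diagonal_mul, Matrix.mul_diagonal]
  unfold Smat
  by_cases h : ∀ j, s' (cyc j) = s j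
  · rw [if_pos h]
    have : ∏ j, (if s' j = 0 then lam else lam ^ 2) =
        ∏ j, (if s j = 0 then lam else lam ^ 2) := by
      refine (Fintype.prod_bijective cyc cyc_bijective
        (fun k => if s k = 0 then lam else lam ^ 2)
        (fun k => if s' k = 0 then lam else lam ^ 2) ?_).symm
      intro k
      show (if s k = 0 then lam else lam ^ 2) = (if s' (cyc k) = 0 then lam else lam ^ 2)
      rw [h k]
    rw [this]
    ring
  · rw [if_neg h]
    ring

def remIdx {L : ℕ} (j : Fin L) (i : Fin (L + 1)) : Fin L :=
  if h : (i : ℕ) < (j : ℕ) then ⟨i, lt_trans h j.is_lt⟩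
  else ⟨(i : ℕ) - 1, by have := i.is_lt; have := j.is_lt; omega⟩

lemma insIdx_val {L : ℕ} (j k : Fin L) :
    ((insIdx j k : Fin (L+1)) : ℕ) = if (k : ℕ) < (j : ℕ) then (k : ℕ) else (k : ℕ) + 1 := by
  unfold insIdx; split <;> rfl

lemma remIdx_val {L : ℕ} (j : Fin L) (i : Fin (L+1)) :
    ((remIdx j i : Fin L) : ℕ) = if (i : ℕ) < (j : ℕ) then (i : ℕ) else (i : ℕ) - 1 := by
  unfold remIdx; split <;> rfl

lemma prod_insIdx {L : ℕ} (j : Fin L) (f : Fin (L + 1) → ℂ) :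
    ∏ i, f i = f j.castSucc * f j.succ * ∏ k ∈ Finset.univ.erase j, f (insIdx j k) := by
  have hcs : ((j.castSucc : Fin (L+1)) : ℕ) = (j : ℕ) := rfl
  have hsu : ((j.succ : Fin (L+1)) : ℕ) = (j : ℕ) + 1 := rfl
  have hmem : j.succ ∈ Finset.univ.erase j.castSucc := by
    apply Finset.mem_erase.2
    refine ⟨?_, Finset.mem_univ _⟩
    rw [Ne, Fin.ext_iff, hsu, hcs]; omega
  rw [← Finset.mul_prod_erase Finset.univ f (Finset.mem_univ j.castSucc),
      ← Finset.mul_prod_erase _ f hmem, mul_assoc]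
  congr 1
  congr 1
  refine (Finset.prod_nbij' (insIdx j) (remIdx j) ?_ ?_ ?_ ?_ ?_).symm
  · intro k hk
    have hk' : (k : ℕ) ≠ (j : ℕ) :=
      fun h => (Finset.mem_erase.1 hk).1 (Fin.ext h)
    have hkl := k.is_lt
    simp only [Finset.mem_erase, Finset.mem_univ, and_true, Ne, Fin.ext_iff,
      hcs, hsu, insIdx_val]
    constructor <;> (split <;> omega)
  · intro i hi
    simp only [Finset.mem_erase, Finset.mem_univ, and_true, Ne, Fin.ext_iff,
      hcs, hsu] at hi
    obtain ⟨hi1, hi2⟩ := hi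
    have := i.is_lt
    simp only [Finset.mem_erase, Finset.mem_univ, and_true, Ne, Fin.ext_iff, remIdx_val]
    split <;> omega
  · intro k hk
    have hk' : (k : ℕ) ≠ (j : ℕ) :=
      fun h => (Finset.mem_erase.1 hk).1 (Fin.ext h)
    have hkl := k.is_lt
    apply Fin.ext
    rw [remIdx_val, insIdx_val]
    split <;> (try split) <;> omega
  · intro i hi
    simp only [Finset.mem_erase, Finset.mem_univ, and_true, Ne, Fin.ext_iff,
      hcs, hsu] at hi
    obtain ⟨hi1, hi2⟩ := hi
    have := i.is_lt
    apply Fin.ext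
    rw [insIdx_val, remIdx_val]
    split <;> (try split) <;> omega
  · intro k _
    rfl

lemma Mmat_mul_qjMat (lam ζ ζ' : ℂ) (hz : ζ = ζ' * lam ^ 2) {L : ℕ} (j : Fin L) :
    Mmat lam (L + 1) * qjMat ζ' j = qjMat ζ j * Mmat lam L := by
  subst hz
  rw [Mmat_diagonal, Mmat_diagonal]
  ext s' s
  rw [Matrix.diagonal_mul, Matrix.mul_diagonal]
  unfold qjMat
  by_cases h1 : s j = 1
  · by_cases hP : ∀ k ∈ Finset.univ.erase j, s' (insIdx j k) = s k
    · have hE : ∏ k ∈ Finset.univ.erase j, (if s' (insIdx j k) = s k then (1:ℂ) else 0) = 1 :=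
        Finset.prod_eq_one (fun k hk => by rw [if_pos (hP k hk)])
      rw [hE]
      rw [prod_insIdx j (fun i => if s' i = 0 then lam else lam ^ 2)]
      have hsplit : ∏ k, (if s k = 0 then lam else lam ^ 2) =
          lam ^ 2 * ∏ k ∈ Finset.univ.erase j, (if s k = 0 then lam else lam ^ 2) := by
        rw [← Finset.mul_prod_erase Finset.univ _ (Finset.mem_univ j), h1]
        norm_num
      rw [hsplit]
      have hPr : (∏ k ∈ Finset.univ.erase j,
            (fun i => if s' i = 0 then lam else lam ^ 2) (insIdx j k))
          = ∏ k ∈ Finset.univ.erase j, (if s k = 0 then lam else lam ^ 2) :=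
        Finset.prod_congr rfl (fun k hk => by
          show (if s' (insIdx j k) = 0 then lam else lam ^ 2) = _
          rw [hP k hk])
      rw [hPr]
      have hf2 : ∀ a : Fin 2, a = 0 ∨ a = 1 := by decide
      have q00 : ∀ z : ℂ, qloc z 1 0 0 = 1 := fun z => by simp [qloc]
      have q11 : ∀ z : ℂ, qloc z 1 1 1 = -z := fun z => by simp [qloc]
      have q01 : ∀ z : ℂ, qloc z 1 0 1 = 0 := fun z => by simp [qloc]
      have q10 : ∀ z : ℂ, qloc z 1 1 0 = 0 := fun z => by simp [qloc]
      rcases hf2 (s' j.castSucc) with ho1 | ho1 <;>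
        rcases hf2 (s' j.succ) with ho2 | ho2 <;>
          rw [ho1, ho2, h1] <;>
            simp only [q00, q11, q01, q10,
              show (if (0 : Fin 2) = 0 then lam else lam ^ 2) = lam from rfl,
              show (if (1 : Fin 2) = 0 then lam else lam ^ 2) = lam ^ 2 from rfl] <;>
              ring_nf <;> norm_num
    · push_neg at hP
      obtain ⟨k, hk, hne⟩ := hP
      have hE : ∏ k ∈ Finset.univ.erase j, (if s' (insIdx j k) = s k then (1:ℂ) else 0) = 0 :=
        Finset.prod_eq_zero hk (by rw [if_neg hne])
      rw [hE]
      ring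
  · simp only [qloc, if_neg h1]
    ring

lemma Mmat_mul_QsumMat (lam ζ ζ' : ℂ) (hz : ζ = ζ' * lam ^ 2) (L : ℕ) :
    Mmat lam (L + 1) * QsumMat ζ' L = QsumMat ζ L * Mmat lam L := by
  cases L with
  | zero => simp [QsumMat]
  | succ M =>
    simp only [QsumMat]
    rw [Matrix.mul_add, Matrix.add_mul]
    congr 1
    · rw [← Matrix.mul_assoc, Mmat_mul_Smat, Matrix.mul_assoc,
        Mmat_mul_qjMat lam ζ ζ' hz, ← Matrix.mul_assoc]
    · rw [Matrix.sum_mul, Matrix.mul_sum]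
      apply Finset.sum_congr rfl
      intro j _
      rw [Matrix.mul_smul, Matrix.smul_mul, Mmat_mul_qjMat lam ζ ζ' hz]

lemma Mop_adjoint (lam : ℝ) (L : ℕ) :
    LinearMap.adjoint (Mop (lam : ℂ) L) = Mop (lam : ℂ) L := by
  rw [Mop, ← Matrix.toEuclideanLin_conjTranspose_eq_adjoint, Mmat_conjTranspose]

lemma Mop_mem_W (lam : ℝ) (L : ℕ) {x : V L} (hx : x ∈ W L) :
    Mop (lam : ℂ) L x ∈ W L := by
  rw [W, Module.End.mem_eigenspace_iff] at hx ⊢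
  have hcomm : Sop L ∘ₗ Mop (lam : ℂ) L = Mop (lam : ℂ) L ∘ₗ Sop L := by
    rw [Sop, Mop, ← toEuclideanLin_mul, ← toEuclideanLin_mul, Mmat_mul_Smat]
  have := congrArg (fun f => f x) hcomm
  simp only [LinearMap.comp_apply] at this
  rw [this, hx, map_smul]

lemma Mop_mem_W_orth (lam : ℝ) (L : ℕ) {v : V L} (hv : v ∈ (W L)ᗮ) :
    Mop (lam : ℂ) L v ∈ (W L)ᗮ := by
  rw [Submodule.mem_orthogonal] at hv ⊢
  intro u hu
  rw [← LinearMap.adjoint_inner_left, Mop_adjoint]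
  exact hv _ (Mop_mem_W lam L hu)

lemma Mop_comm_proj (lam : ℝ) (L : ℕ) :
    Mop (lam : ℂ) L ∘ₗ ((W L).subtype ∘ₗ (Submodule.orthogonalProjection (W L)).toLinearMap) =
    ((W L).subtype ∘ₗ (Submodule.orthogonalProjection (W L)).toLinearMap) ∘ₗ Mop (lam : ℂ) L := by
  apply LinearMap.ext
  intro x
  simp only [LinearMap.comp_apply, ContinuousLinearMap.coe_coe, Submodule.coe_subtype]
  have hd : Mop (lam : ℂ) L x =
      Mop (lam : ℂ) L ↑(Submodule.orthogonalProjection (W L) x) +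
      Mop (lam : ℂ) L (x - ↑(Submodule.orthogonalProjection (W L) x)) := by
    rw [← map_add]
    congr 1
    abel
  rw [hd, map_add, (show Submodule.orthogonalProjection (W L) (Mop (lam : ℂ) L (x - ↑(Submodule.orthogonalProjection (W L) x))) = 0 from
    Submodule.orthogonalProjectionOnto_apply_of_mem_orthogonal
    (Mop_mem_W_orth lam L (Submodule.sub_starProjection_mem_orthogonal x))), add_zero]
  exact (Submodule.starProjection_eq_self_iff.mpr
    (Mop_mem_W lam L (Submodule.orthogonalProjection (W L) x).2)).symm

lemma Mop_inv_comp (lam : ℂ) (hlam : lam ≠ 0) (L : ℕ) :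
    Mop lam⁻¹ L ∘ₗ Mop lam L = LinearMap.id ∧
    Mop lam L ∘ₗ Mop lam⁻¹ L = LinearMap.id := by
  constructor
  · rw [Mop, Mop, ← toEuclideanLin_mul, Mmat_mul_Mmat,
      inv_mul_cancel₀ hlam, Mmat_one, toEuclideanLin_one]
  · rw [Mop, Mop, ← toEuclideanLin_mul, Mmat_mul_Mmat,
      mul_inv_cancel₀ hlam, Mmat_one, toEuclideanLin_one]

end Aux

/-- equation (2.33).  For nonzero real `ζ`, `λ` the conjugation
relations `M(λ) Q(λ⁻²ζ) = Q(ζ) M(λ)` and `M(λ⁻¹) Q(λ⁻²ζ)† = Q(ζ)† M(λ⁻¹)` hold. -/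
theorem statement15 (ζ lam : ℝ) (hζ : ζ ≠ 0) (hlam : lam ≠ 0) (L : ℕ) (hL : 1 ≤ L) :
    Mop (lam : ℂ) (L + 1) ∘ₗ Qsc (ζ / lam ^ 2) L = Qsc ζ L ∘ₗ Mop (lam : ℂ) L ∧
    Mop ((lam : ℂ))⁻¹ L ∘ₗ Qadj (ζ / lam ^ 2) (L + 1) =
      Qadj ζ (L + 1) ∘ₗ Mop ((lam : ℂ))⁻¹ (L + 1) := by
  have hlamC : (lam : ℂ) ≠ 0 := by exact_mod_cast hlam
  have hz : (ζ : ℂ) = ((ζ / lam ^ 2 : ℝ) : ℂ) * (lam : ℂ) ^ 2 := by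
    push_cast
    field_simp
  have hmat : Mmat (lam : ℂ) (L + 1) * QsumMat (((ζ / lam ^ 2 : ℝ)) : ℂ) L =
      QsumMat (ζ : ℂ) L * Mmat (lam : ℂ) L := Mmat_mul_QsumMat _ _ _ hz L
  have part1 : Mop (lam : ℂ) (L + 1) ∘ₗ Qsc (ζ / lam ^ 2) L = Qsc ζ L ∘ₗ Mop (lam : ℂ) L := by
    unfold Qsc
    rw [LinearMap.comp_smul, LinearMap.smul_comp]
    congr 1
    calc Mop (lam : ℂ) (L + 1) ∘ₗ
        (Matrix.toEuclideanLin (QsumMat (((ζ / lam ^ 2 : ℝ)) : ℂ) L) ∘ₗ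
          ((W L).subtype ∘ₗ (Submodule.orthogonalProjection (W L)).toLinearMap))
        = (Mop (lam : ℂ) (L + 1) ∘ₗ Matrix.toEuclideanLin (QsumMat (((ζ / lam ^ 2 : ℝ)) : ℂ) L)) ∘ₗ
          ((W L).subtype ∘ₗ (Submodule.orthogonalProjection (W L)).toLinearMap) := by
            rw [LinearMap.comp_assoc]
      _ = Matrix.toEuclideanLin (QsumMat (ζ : ℂ) L) ∘ₗ (Mop (lam : ℂ) L ∘ₗ
          ((W L).subtype ∘ₗ (Submodule.orthogonalProjection (W L)).toLinearMap)) := by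
            rw [Mop, ← toEuclideanLin_mul, hmat, toEuclideanLin_mul, LinearMap.comp_assoc]
            rfl
      _ = Matrix.toEuclideanLin (QsumMat (ζ : ℂ) L) ∘ₗ
          (((W L).subtype ∘ₗ (Submodule.orthogonalProjection (W L)).toLinearMap) ∘ₗ Mop (lam : ℂ) L) := by
            rw [Mop_comm_proj]
      _ = (Matrix.toEuclideanLin (QsumMat (ζ : ℂ) L) ∘ₗ
          ((W L).subtype ∘ₗ (Submodule.orthogonalProjection (W L)).toLinearMap)) ∘ₗ Mop (lam : ℂ) L := by
            apply LinearMap.ext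
            intro x
            rfl
  refine ⟨part1, ?_⟩
  have h2 := congrArg LinearMap.adjoint part1
  rw [LinearMap.adjoint_comp, LinearMap.adjoint_comp, Mop_adjoint, Mop_adjoint] at h2
  have hQ' : Qadj (ζ / lam ^ 2) (L + 1) = LinearMap.adjoint (Qsc (ζ / lam ^ 2) L) := rfl
  have hQ : Qadj ζ (L + 1) = LinearMap.adjoint (Qsc ζ L) := rfl
  rw [hQ', hQ]
  obtain ⟨hinv1L, hinv2L⟩ := Mop_inv_comp (lam : ℂ) hlamC L
  obtain ⟨hinv1L1, hinv2L1⟩ := Mop_inv_comp (lam : ℂ) hlamC (L + 1)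
  have hy1 : ∀ y : V L, Mop ((lam : ℂ))⁻¹ L (Mop (lam : ℂ) L y) = y := fun y => by
    simpa using congrArg (fun f => f y) hinv1L
  have hy2 : ∀ y : V (L + 1), Mop (lam : ℂ) (L + 1) (Mop ((lam : ℂ))⁻¹ (L + 1) y) = y :=
    fun y => by simpa using congrArg (fun f => f y) hinv2L1
  have h2' : ∀ y : V (L + 1), LinearMap.adjoint (Qsc (ζ / lam ^ 2) L) (Mop (lam : ℂ) (L + 1) y) =
      Mop (lam : ℂ) L (LinearMap.adjoint (Qsc ζ L) y) := fun y => by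
    simpa using congrArg (fun f => f y) h2
  apply LinearMap.ext
  intro x
  simp only [LinearMap.comp_apply]
  calc Mop ((lam : ℂ))⁻¹ L (LinearMap.adjoint (Qsc (ζ / lam ^ 2) L) x)
      = Mop ((lam : ℂ))⁻¹ L (LinearMap.adjoint (Qsc (ζ / lam ^ 2) L)
          (Mop (lam : ℂ) (L + 1) (Mop ((lam : ℂ))⁻¹ (L + 1) x))) := by rw [hy2]
    _ = Mop ((lam : ℂ))⁻¹ L (Mop (lam : ℂ) L
          (LinearMap.adjoint (Qsc ζ L) (Mop ((lam : ℂ))⁻¹ (L + 1) x))) := by rw [h2']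
    _ = LinearMap.adjoint (Qsc ζ L) (Mop ((lam : ℂ))⁻¹ (L + 1) x) := hy1 _


end EightVertex
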